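/- For every integer n ≥ 1 and real r > 0, let p = (r, 0, …, 0) ∈ S^n_r and q = −p. Then the real subspaces DW_p({v ∈ ℝ^{n+1} : ⟨p, v⟩ = 0}) and DW_q({v ∈ ℝ^{n+1} : ⟨q, v⟩ = 0}) of ℂ^n are complementary: their intersection is {0} and their sum is all of ℂ^n (explicitly, they equal (1 + 2ir)·ℝ^n and (1 − 2ir)·ℝ^n). That is, the self-intersection of the Whitney sphere is transverse. -/
import Mathlib


open scoped BigOperators RealInnerProductSpace

/-- The Whitney sphere parameterization `W : ℝ^{n+1} → ℂ^n`,
`W(x)_j = x_j + 2i·x_0·x_j` for `1 ≤ j ≤ n`. -/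
noncomputable def whitney (n : ℕ) (x : EuclideanSpace ℝ (Fin (n + 1))) : Fin n → ℂ :=
  fun j => (x j.succ : ℂ) + 2 * Complex.I * (x 0 : ℂ) * (x j.succ : ℂ)

noncomputable def coordC (n : ℕ) (k : Fin (n+1)) : EuclideanSpace ℝ (Fin (n+1)) →L[ℝ] ℂ :=
  Complex.ofRealCLM.comp (EuclideanSpace.proj k)

lemma coordC_apply (n : ℕ) (k : Fin (n+1)) (x : EuclideanSpace ℝ (Fin (n+1))) :
    coordC n k x = (x k : ℂ) := rfl

lemma whitney_hasFDerivAt (n : ℕ) (x : EuclideanSpace ℝ (Fin (n+1))) :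
    HasFDerivAt (whitney n) (ContinuousLinearMap.pi fun j =>
      coordC n j.succ + (2*Complex.I) • ((x 0 : ℂ) • coordC n j.succ + (x j.succ : ℂ) • coordC n 0)) x := by
  rw [hasFDerivAt_pi']
  intro j
  have hf : HasFDerivAt (fun y : EuclideanSpace ℝ (Fin (n+1)) => (y j.succ : ℂ)) (coordC n j.succ) x :=
    (coordC n j.succ).hasFDerivAt
  have hg : HasFDerivAt (fun y : EuclideanSpace ℝ (Fin (n+1)) => (y 0 : ℂ)) (coordC n 0) x :=
    (coordC n 0).hasFDerivAt
  have h := hf.add ((hg.mul hf).const_mul (2*Complex.I))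
  have heq : (fun y : EuclideanSpace ℝ (Fin (n+1)) => (y j.succ : ℂ) + 2*Complex.I*((y 0 : ℂ)*(y j.succ : ℂ)))
      = fun y => whitney n y j := by
    funext y; simp [whitney]; ring
  rw [← heq]
  exact h

lemma whitney_fderiv_apply (n : ℕ) (x : EuclideanSpace ℝ (Fin (n+1)))
    (v : EuclideanSpace ℝ (Fin (n+1))) (j : Fin n) :
    fderiv ℝ (whitney n) x v j
      = (v j.succ : ℂ) + 2*Complex.I*((x 0 : ℂ) * (v j.succ : ℂ) + (x j.succ : ℂ) * (v 0 : ℂ)) := by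
  rw [(whitney_hasFDerivAt n x).fderiv]
  simp [coordC_apply, Complex.real_smul]
  ring

/-- The self-intersection of the Whitney sphere is transverse: with `p = (r, 0, …, 0)` and
`q = −p`, the images of the tangent spaces of `S^n_r` at `p` and `q` under `DW` are the real
subspaces `(1 + 2ir)·ℝ^n` and `(1 − 2ir)·ℝ^n` of `ℂ^n`, and these are complementary. -/
theorem stmt8 (n : ℕ) (hn : 1 ≤ n) (r : ℝ) (hr : 0 < r) :
    let p : EuclideanSpace ℝ (Fin (n + 1)) := EuclideanSpace.single 0 r
    let A : Set (Fin n → ℂ) := fderiv ℝ (whitney n) p '' {v | ⟪p, v⟫ = 0}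
    let B : Set (Fin n → ℂ) := fderiv ℝ (whitney n) (-p) '' {v | ⟪-p, v⟫ = 0}
    A = {z | ∃ v : Fin n → ℝ, ∀ j, z j = (1 + 2 * Complex.I * (r : ℂ)) * (v j : ℂ)} ∧
    B = {z | ∃ v : Fin n → ℝ, ∀ j, z j = (1 - 2 * Complex.I * (r : ℂ)) * (v j : ℂ)} ∧
    A ∩ B = {0} ∧
    (∀ z : Fin n → ℂ, ∃ a ∈ A, ∃ b ∈ B, z = a + b) := by
  intro p A B
  have hr' : r ≠ 0 := ne_of_gt hr
  have hp0 : p 0 = r := by simp [p, EuclideanSpace.single_apply]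
  have hps : ∀ j : Fin n, p j.succ = 0 := by
    intro j
    simp [p, EuclideanSpace.single_apply, (Fin.succ_ne_zero j)]
  have hinner : ∀ v : EuclideanSpace ℝ (Fin (n+1)), ⟪p, v⟫ = r * v 0 := by
    intro v
    simp [p, EuclideanSpace.inner_single_left]
  have hnp0 : (-p) 0 = -r := by simp [hp0]
  have hnps : ∀ j : Fin n, (-p) j.succ = 0 := by intro j; simp [hps j]
  -- characterization of A
  have hA : A = {z | ∃ v : Fin n → ℝ, ∀ j, z j = (1 + 2 * Complex.I * (r : ℂ)) * (v j : ℂ)} := by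
    ext z
    constructor
    · rintro ⟨v, hv, rfl⟩
      refine ⟨fun j => v j.succ, fun j => ?_⟩
      have hv0 : v 0 = 0 := by
        have := hinner v
        rw [Set.mem_setOf_eq, this] at hv
        exact (mul_eq_zero.mp hv).resolve_left hr'
      rw [whitney_fderiv_apply, hp0, hps, hv0]
      push_cast
      ring
    · rintro ⟨w, hw⟩
      refine ⟨(WithLp.equiv 2 _).symm (Fin.cons 0 w), ?_, ?_⟩
      · rw [Set.mem_setOf_eq, hinner]
        simp
      · funext j
        rw [whitney_fderiv_apply, hp0, hps, hw j]
        simp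
        ring
  -- characterization of B
  have hB : B = {z | ∃ v : Fin n → ℝ, ∀ j, z j = (1 - 2 * Complex.I * (r : ℂ)) * (v j : ℂ)} := by
    ext z
    constructor
    · rintro ⟨v, hv, rfl⟩
      refine ⟨fun j => v j.succ, fun j => ?_⟩
      have hv0 : v 0 = 0 := by
        rw [Set.mem_setOf_eq, inner_neg_left, hinner, neg_eq_zero] at hv
        exact (mul_eq_zero.mp hv).resolve_left hr'
      rw [whitney_fderiv_apply, hnp0, hnps, hv0]
      push_cast
      ring
    · rintro ⟨w, hw⟩
      refine ⟨(WithLp.equiv 2 _).symm (Fin.cons 0 w), ?_, ?_⟩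
      · rw [Set.mem_setOf_eq, inner_neg_left, hinner]
        simp
      · funext j
        rw [whitney_fderiv_apply, hnp0, hnps, hw j]
        simp
        ring
  refine ⟨hA, hB, ?_, ?_⟩
  · ext z
    rw [Set.mem_inter_iff, hA, hB]
    constructor
    · rintro ⟨⟨u, hu⟩, ⟨w, hw⟩⟩
      have hz : ∀ j, z j = 0 := by
        intro j
        have h := (hu j).symm.trans (hw j)
        have hre := congrArg Complex.re h
        have him := congrArg Complex.im h
        simp [Complex.ext_iff] at hre him
        have hu0 : u j = 0 := by nlinarith
        rw [hu j, hu0]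
        simp
      funext j; exact hz j
    · rintro rfl
      exact ⟨⟨0, fun j => by simp⟩, ⟨0, fun j => by simp⟩⟩
  · intro z
    set u : Fin n → ℝ := fun j => ((z j).re + (z j).im / (2*r)) / 2 with hu
    set w : Fin n → ℝ := fun j => ((z j).re - (z j).im / (2*r)) / 2 with hw
    refine ⟨fun j => (1 + 2 * Complex.I * (r:ℂ)) * (u j : ℂ), ?_,
      fun j => (1 - 2 * Complex.I * (r:ℂ)) * (w j : ℂ), ?_, ?_⟩
    · rw [hA]; exact ⟨u, fun j => rfl⟩
    · rw [hB]; exact ⟨w, fun j => rfl⟩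
    funext j
    simp only [Pi.add_apply]
    have h1 : u j + w j = (z j).re := by
      simp only [hu, hw]; ring
    have h2 : 2 * r * (u j - w j) = (z j).im := by
      simp only [hu, hw]; field_simp; ring
    rw [← Complex.re_add_im (z j), ← h1, ← h2]
    push_cast
    ring
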